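/- If a single rotation transforms tree S into tree T, then all internal edges of S except exactly one are common with T; equivalently, the number of common edge pairs between S and T is at least n - 2, where n is the number of internal nodes. -/
import Mathlib


inductive BT : Type
  | leaf : BT
  | node : BT → BT → BT
deriving DecidableEq

namespace BT

/-- number of internal nodes -/
def size : BT → ℕ
  | leaf => 0
  | node l r => size l + size r + 1

/-- number of leaves -/
def nl (t : BT) : ℕ := size t + 1

/-- one (right) rotation somewhere in the tree -/
inductive Rot : BT → BT → Prop
  | root (a b c : BT) : Rot (node (node a b) c) (node a (node b c))
  | congrL {l l' : BT} (r : BT) : Rot l l' → Rot (node l r) (node l' r)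
  | congrR (l : BT) {r r' : BT} : Rot r r' → Rot (node l r) (node l r')

/-- a rotation move: a right rotation or its inverse (a left rotation) -/
def Move (s t : BT) : Prop := Rot s t ∨ Rot t s

/-- `Chain n s t`: `s` is transformed into `t` by `n` rotation moves -/
inductive Chain : ℕ → BT → BT → Prop
  | refl (t : BT) : Chain 0 t t
  | step {n : ℕ} {s u t : BT} : Move s u → Chain n u t → Chain (n + 1) s t

/-- rotation distance -/
noncomputable def dR (s t : BT) : ℕ := sInf {n | Chain n s t}

def isNode : BT → Bool
  | leaf => false
  | node _ _ => true

/-- the multiset of leaf partitions induced by internal edges, where the leaves of the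
tree are numbered from `k` on, left to right; each internal edge is recorded by the
set of leaf numbers below it. -/
def iparts : BT → ℕ → Multiset (Finset ℕ)
  | leaf, _ => 0
  | node l r, k =>
      ((if isNode l then {Finset.Ico k (k + nl l)} else 0) + iparts l k)
        + ((if isNode r then {Finset.Ico (k + nl l) (k + nl l + nl r)} else 0)
            + iparts r (k + nl l))

/-- number of common edge pairs -/
def commonEdges (s t : BT) : ℕ := ((iparts s 0) ∩ (iparts t 0)).card

lemma rot_size {s t : BT} (h : Rot s t) : size s = size t := by
  induction h with
  | root a b c => simp [size]; omega
  | congrL r _ ih => simp [size, ih]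
  | congrR l _ ih => simp [size, ih]

lemma isNode_node (l r : BT) : isNode (node l r) = true := rfl

lemma rot_isNode {s t : BT} (h : Rot s t) : isNode s = true ∧ isNode t = true := by
  cases h <;> simp [isNode]

lemma aux_card (t : BT) (s0 : Finset ℕ) : ∀ k : ℕ,
    ((if isNode t then ({s0} : Multiset (Finset ℕ)) else 0) + iparts t k).card = size t := by
  induction t generalizing s0 with
  | leaf => intro k; simp [isNode, iparts, size]
  | node l r ihl ihr =>
    intro k
    simp only [isNode_node, if_true, iparts, size, Multiset.card_add, Multiset.card_singleton]
    have h1 := ihl (Finset.Ico k (k + nl l)) k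
    have h2 := ihr (Finset.Ico (k + nl l) (k + nl l + nl r)) (k + nl l)
    simp only [Multiset.card_add] at h1 h2
    omega

lemma rot_common {S T : BT} (h : Rot S T) : ∀ k : ℕ,
    ∃ M : Multiset (Finset ℕ), M ≤ iparts S k ∧ M ≤ iparts T k ∧ size S ≤ M.card + 2 := by
  induction h with
  | root a b c =>
    intro k
    set A := (if isNode a then ({Finset.Ico k (k + nl a)} : Multiset (Finset ℕ)) else 0) with hA
    set B := (if isNode b then ({Finset.Ico (k + nl a) (k + nl a + nl b)} : Multiset (Finset ℕ))
      else 0) with hB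
    set C := (if isNode c then
      ({Finset.Ico (k + nl a + nl b) (k + nl a + nl b + nl c)} : Multiset (Finset ℕ)) else 0)
      with hC
    refine ⟨(A + iparts a k) + (B + iparts b (k + nl a))
        + (C + iparts c (k + nl a + nl b)), ?_, ?_, ?_⟩
    · have e1 : k + nl (node a b) = k + nl a + nl b := by simp [nl, size]; omega
      have hSeq : iparts (node (node a b) c) k
          = {Finset.Ico k (k + nl a + nl b)} + ((A + iparts a k) + (B + iparts b (k + nl a))
            + (C + iparts c (k + nl a + nl b))) := by
        simp only [iparts, isNode_node, if_true, e1, ← hA, ← hB, ← hC]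
        abel
      rw [hSeq]
      exact Multiset.le_add_left _ _
    · have e2 : k + nl a + nl (node b c) = k + nl a + nl b + nl c := by
        simp [nl, size]; omega
      have hTeq : iparts (node a (node b c)) k
          = {Finset.Ico (k + nl a) (k + nl a + nl b + nl c)} + ((A + iparts a k)
            + (B + iparts b (k + nl a)) + (C + iparts c (k + nl a + nl b))) := by
        simp only [iparts, isNode_node, if_true, e2, ← hA, ← hB, ← hC]
        abel
      rw [hTeq]
      exact Multiset.le_add_left _ _
    · have h1 := aux_card a (Finset.Ico k (k + nl a)) k
      have h2 := aux_card b (Finset.Ico (k + nl a) (k + nl a + nl b)) (k + nl a)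
      have h3 := aux_card c (Finset.Ico (k + nl a + nl b) (k + nl a + nl b + nl c))
        (k + nl a + nl b)
      rw [← hA] at h1
      rw [← hB] at h2
      rw [← hC] at h3
      simp only [Multiset.card_add, size]
      simp only [Multiset.card_add] at h1 h2 h3
      omega
  | @congrL l l' r hrot ih =>
    intro k
    obtain ⟨M, hM1, hM2, hMc⟩ := ih k
    obtain ⟨hn1, hn2⟩ := rot_isNode hrot
    have hsz := rot_size hrot
    have hnl : nl l = nl l' := by simp [nl, hsz]
    refine ⟨({Finset.Ico k (k + nl l)} + M)
        + ((if isNode r then {Finset.Ico (k + nl l) (k + nl l + nl r)} else 0)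
            + iparts r (k + nl l)), ?_, ?_, ?_⟩
    · show _ ≤ iparts (node l r) k
      simp only [iparts, hn1, if_true]
      exact add_le_add (add_le_add le_rfl hM1) le_rfl
    · show _ ≤ iparts (node l' r) k
      simp only [iparts, hn2, if_true, ← hnl]
      exact add_le_add (add_le_add le_rfl hM2) le_rfl
    · have h2 := aux_card r (Finset.Ico (k + nl l) (k + nl l + nl r)) (k + nl l)
      simp only [Multiset.card_add, Multiset.card_singleton, size]
      simp only [Multiset.card_add] at h2
      omega
  | @congrR l r r' hrot ih =>
    intro k
    obtain ⟨M, hM1, hM2, hMc⟩ := ih (k + nl l)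
    obtain ⟨hn1, hn2⟩ := rot_isNode hrot
    refine ⟨((if isNode l then {Finset.Ico k (k + nl l)} else 0) + iparts l k)
        + ({Finset.Ico (k + nl l) (k + nl l + nl r)} + M), ?_, ?_, ?_⟩
    · show _ ≤ iparts (node l r) k
      simp only [iparts, hn1, if_true]
      exact add_le_add le_rfl (add_le_add le_rfl hM1)
    · show _ ≤ iparts (node l r') k
      have hsz := rot_size hrot
      have hnl : nl r = nl r' := by simp [nl, hsz]
      simp only [iparts, hn2, if_true, ← hnl]
      exact add_le_add le_rfl (add_le_add le_rfl hM2)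
    · have h1 := aux_card l (Finset.Ico k (k + nl l)) k
      simp only [Multiset.card_add, Multiset.card_singleton, size]
      simp only [Multiset.card_add] at h1
      omega

theorem common_edges_after_one_rotation (n : ℕ) (S T : BT)
    (hS : S.size = n) (h : Move S T) : n - 2 ≤ commonEdges S T := by
  rcases h with h | h
  · obtain ⟨M, h1, h2, hc⟩ := rot_common h 0
    have : M ≤ iparts S 0 ∩ iparts T 0 := Multiset.le_inter h1 h2
    have := Multiset.card_le_card this
    unfold commonEdges
    omega
  · obtain ⟨M, h1, h2, hc⟩ := rot_common h 0
    have : M ≤ iparts S 0 ∩ iparts T 0 := Multiset.le_inter h2 h1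
    have := Multiset.card_le_card this
    have hsz := rot_size h
    unfold commonEdges
    omega

end BT
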